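/- Suppose E[ξ²] < ∞. Then for every n ≥ 1 and every Z ∈ M_n(ℂ): ⦀Z⦀_{X,2}² = (1/2) σ² ‖Z‖_F² + (1/2) μ² |tr(Z)|², where ‖Z‖_F is the Frobenius norm and tr(Z) the trace of Z. -/

import Mathlib

open MeasureTheory ProbabilityTheory Matrix

/-- The norm `‖A‖_{X,d}` on Hermitian matrices induced by the random vector `X`:
`(E[|Σ_i X_i λ_i|^d] / Γ(d+1))^(1/d)`, where `λ` is the eigenvalue vector of `A`. -/
noncomputable def hermNormXd {Ω : Type} [MeasurableSpace Ω] (P : Measure Ω)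
    {n : ℕ} (X : Fin n → Ω → ℝ) (d : ℝ) (A : Matrix (Fin n) (Fin n) ℂ) : ℝ :=
  if hA : A.IsHermitian then
    ((∫ ω, |∑ i, X i ω * hA.eigenvalues i| ^ d ∂P) / Real.Gamma (d + 1)) ^ (1 / d)
  else 0

/-- The norm `⦀Z⦀_{X,d}` on all of `M_n(ℂ)`:
`((1/(2π b_d)) ∫_0^{2π} ‖e^{it}Z + e^{-it}Z^*‖_{X,d}^d dt)^(1/d)` with
`b_d = Γ(d+1)/Γ(d/2+1)^2`, so `1/(2π b_d) = Γ(d/2+1)^2/(2π Γ(d+1))`. -/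
noncomputable def matNormXd {Ω : Type} [MeasurableSpace Ω] (P : Measure Ω)
    {n : ℕ} (X : Fin n → Ω → ℝ) (d : ℝ) (Z : Matrix (Fin n) (Fin n) ℂ) : ℝ :=
  ((Real.Gamma (d / 2 + 1) ^ 2 / (2 * Real.pi * Real.Gamma (d + 1))) *
    ∫ t in (0:ℝ)..(2 * Real.pi),
      hermNormXd P X d (Complex.exp (↑t * Complex.I) • Z +
        Complex.exp (-(↑t * Complex.I)) • Zᴴ) ^ d) ^ (1 / d)

/-- The Frobenius norm of a complex matrix. -/
noncomputable def frobNorm {n : ℕ} (A : Matrix (Fin n) (Fin n) ℂ) : ℝ :=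
  Real.sqrt (∑ i, ∑ j, ‖A i j‖ ^ 2)

lemma herm_trace_eq {n : ℕ} {A : Matrix (Fin n) (Fin n) ℂ} (hA : A.IsHermitian) :
    A.trace = ((∑ i, hA.eigenvalues i : ℝ) : ℂ) := by
  conv_lhs => rw [hA.spectral_theorem, Unitary.conjStarAlgAut_apply]
  rw [trace_mul_cycle, (mem_unitaryGroup_iff'.mp hA.eigenvectorUnitary.2), one_mul,
    trace_diagonal]
  push_cast
  rfl

lemma herm_sumsq {n : ℕ} {A : Matrix (Fin n) (Fin n) ℂ} (hA : A.IsHermitian) :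
    ∑ i, ∑ j, ‖A i j‖ ^ 2 = ∑ i, hA.eigenvalues i ^ 2 := by
  have hsym : ∀ i j, A j i = (starRingEnd ℂ) (A i j) := by
    intro i j
    conv_lhs => rw [← hA]
    rfl
  have h1 : (A * A).trace = ((∑ i, ∑ j, ‖A i j‖ ^ 2 : ℝ) : ℂ) := by
    rw [Matrix.trace, Complex.ofReal_sum]
    refine Finset.sum_congr rfl fun i _ => ?_
    rw [Complex.ofReal_sum, Matrix.diag_apply, Matrix.mul_apply]
    refine Finset.sum_congr rfl fun j _ => ?_
    rw [hsym i j, Complex.mul_conj, Complex.sq_norm]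
  have h2 : (A * A).trace = ((∑ i, hA.eigenvalues i ^ 2 : ℝ) : ℂ) := by
    set U : Matrix (Fin n) (Fin n) ℂ := (hA.eigenvectorUnitary : Matrix (Fin n) (Fin n) ℂ)
      with hUdef
    set D : Matrix (Fin n) (Fin n) ℂ := diagonal (RCLike.ofReal ∘ hA.eigenvalues) with hDdef
    have hU : star U * U = 1 := mem_unitaryGroup_iff'.mp hA.eigenvectorUnitary.2
    have hAA : A * A = U * (D * D) * star U := by
      conv_lhs => rw [hA.spectral_theorem, Unitary.conjStarAlgAut_apply]
      calc (U * D * star U) * (U * D * star U)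
          = U * D * (star U * U) * (D * star U) := by noncomm_ring
        _ = U * (D * D) * star U := by rw [hU, mul_one]; noncomm_ring
    rw [hAA, trace_mul_cycle, ← mul_assoc, hU, one_mul]
    have hDD : D * D = diagonal (fun i => ((hA.eigenvalues i : ℂ)) ^ 2) := by
      rw [hDdef, Matrix.diagonal_mul_diagonal]
      congr 1
      funext i
      simp [sq]
    rw [hDD, trace_diagonal]
    push_cast
    rfl
  exact_mod_cast h1.symm.trans h2

lemma integral_sq_sum {Ω : Type} [MeasurableSpace Ω] (P : Measure Ω) [IsProbabilityMeasure P]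
    (ξ : Ω → ℝ) (hmeas : Measurable ξ) (hmom : Integrable (fun ω => ξ ω ^ 2) P)
    {n : ℕ} (X : Fin n → Ω → ℝ) (hXm : ∀ i, Measurable (X i))
    (hindep : iIndepFun X P)
    (hid : ∀ i, IdentDistrib (X i) ξ P P) (a : Fin n → ℝ) :
    ∫ ω, (∑ i, X i ω * a i) ^ 2 ∂P =
      ((∫ ω, ξ ω ^ 2 ∂P) - (∫ ω, ξ ω ∂P) ^ 2) * ∑ i, a i ^ 2
        + (∫ ω, ξ ω ∂P) ^ 2 * (∑ i, a i) ^ 2 := by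
  have hξ2 : MemLp ξ 2 P := (memLp_two_iff_integrable_sq hmeas.aestronglyMeasurable).2 hmom
  have hξi : Integrable ξ P := (hξ2.mono_exponent one_le_two).integrable le_rfl
  have hXi : ∀ i, Integrable (X i) P := fun i => ((hid i).integrable_iff).2 hξi
  have hidsq : ∀ i, IdentDistrib (fun ω => X i ω ^ 2) (fun ω => ξ ω ^ 2) P P := fun i =>
    (hid i).comp (measurable_id.pow_const 2)
  have hXsq : ∀ i, Integrable (fun ω => X i ω ^ 2) P := fun i =>
    ((hidsq i).integrable_iff).2 hmom
  have hmul : ∀ i j, Integrable (fun ω => X i ω * X j ω) P := by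
    intro i j
    rcases eq_or_ne i j with rfl | hij
    · simpa [sq] using hXsq i
    · exact (hindep.indepFun hij).integrable_mul (hXi i) (hXi j)
  have hterm : ∀ i j, Integrable (fun ω => (X i ω * a i) * (X j ω * a j)) P := by
    intro i j
    have : (fun ω => (X i ω * a i) * (X j ω * a j))
        = fun ω => (a i * a j) * (X i ω * X j ω) := by funext ω; ring
    rw [this]
    exact (hmul i j).const_mul _
  have hEmul : ∀ i j, ∫ ω, X i ω * X j ω ∂P =
      (∫ ω, ξ ω ∂P) ^ 2 + (if i = j then (∫ ω, ξ ω ^ 2 ∂P) - (∫ ω, ξ ω ∂P) ^ 2 else 0) := by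
    intro i j
    rcases eq_or_ne i j with rfl | hij
    · have : ∫ ω, X i ω * X i ω ∂P = ∫ ω, ξ ω ^ 2 ∂P := by
        rw [show (fun ω => X i ω * X i ω) = fun ω => X i ω ^ 2 by funext ω; ring]
        exact (hidsq i).integral_eq
      rw [if_pos rfl, this]; ring
    · simp only [if_neg hij, add_zero]
      have h := (hindep.indepFun hij).integral_mul_eq_mul_integral (hXi i).aestronglyMeasurable
        (hXi j).aestronglyMeasurable
      have h1 : ∫ ω, X i ω * X j ω ∂P = (∫ ω, X i ω ∂P) * ∫ ω, X j ω ∂P := h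
      rw [h1, (hid i).integral_eq, (hid j).integral_eq]; ring
  calc ∫ ω, (∑ i, X i ω * a i) ^ 2 ∂P
      = ∫ ω, ∑ i, ∑ j, (X i ω * a i) * (X j ω * a j) ∂P := by
        congr 1; funext ω; rw [sq, Finset.sum_mul_sum]
    _ = ∑ i, ∑ j, ∫ ω, (X i ω * a i) * (X j ω * a j) ∂P := by
        rw [integral_finset_sum _ fun i _ => integrable_finset_sum _ fun j _ => hterm i j]
        exact Finset.sum_congr rfl fun i _ => integral_finset_sum _ fun j _ => hterm i j
    _ = ∑ i, ∑ j, (a i * a j) * ∫ ω, X i ω * X j ω ∂P := by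
        refine Finset.sum_congr rfl fun i _ => Finset.sum_congr rfl fun j _ => ?_
        rw [← integral_const_mul]
        congr 1; funext ω; ring
    _ = ∑ i, ∑ j, (a i * a j) * ((∫ ω, ξ ω ∂P) ^ 2
          + (if i = j then (∫ ω, ξ ω ^ 2 ∂P) - (∫ ω, ξ ω ∂P) ^ 2 else 0)) := by
        refine Finset.sum_congr rfl fun i _ => Finset.sum_congr rfl fun j _ => ?_
        rw [hEmul i j]
    _ = ((∫ ω, ξ ω ^ 2 ∂P) - (∫ ω, ξ ω ∂P) ^ 2) * ∑ i, a i ^ 2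
        + (∫ ω, ξ ω ∂P) ^ 2 * (∑ i, a i) ^ 2 := by
        set M := (∫ ω, ξ ω ∂P) ^ 2 with hM
        set V := (∫ ω, ξ ω ^ 2 ∂P) - M with hV
        simp only [mul_add, Finset.sum_add_distrib, mul_ite, mul_zero,
          Finset.sum_ite_eq, Finset.mem_univ, if_true]
        have h1 : ∑ i, ∑ j, a i * a j * M = M * (∑ i, a i) ^ 2 := by
          rw [sq, Finset.sum_mul_sum, Finset.mul_sum]
          refine Finset.sum_congr rfl fun i _ => ?_
          rw [Finset.mul_sum]
          exact Finset.sum_congr rfl fun j _ => by ring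
        have h2 : ∑ i, a i * a i * V = V * ∑ i, a i ^ 2 := by
          rw [Finset.mul_sum]
          exact Finset.sum_congr rfl fun i _ => by ring
        rw [h1, h2, add_comm]

lemma hermNormXd_two_sq {Ω : Type} [MeasurableSpace Ω] (P : Measure Ω) [IsProbabilityMeasure P]
    (ξ : Ω → ℝ) (hmeas : Measurable ξ) (hmom : Integrable (fun ω => ξ ω ^ 2) P)
    {n : ℕ} (X : Fin n → Ω → ℝ) (hXm : ∀ i, Measurable (X i))
    (hindep : iIndepFun X P)
    (hid : ∀ i, IdentDistrib (X i) ξ P P)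
    {A : Matrix (Fin n) (Fin n) ℂ} (hA : A.IsHermitian) :
    hermNormXd P X 2 A ^ (2:ℝ) =
      (((∫ ω, ξ ω ^ 2 ∂P) - (∫ ω, ξ ω ∂P) ^ 2) * (∑ i, ∑ j, ‖A i j‖ ^ 2)
        + (∫ ω, ξ ω ∂P) ^ 2 * ‖A.trace‖ ^ 2) / 2 := by
  rw [hermNormXd, dif_pos hA]
  have habs : (fun ω => |∑ i, X i ω * hA.eigenvalues i| ^ (2:ℝ))
      = fun ω => (∑ i, X i ω * hA.eigenvalues i) ^ 2 := by
    funext ω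
    rw [show ((2:ℝ)) = ((2:ℕ):ℝ) by norm_num, Real.rpow_natCast, sq_abs]
  rw [habs, integral_sq_sum P ξ hmeas hmom X hXm hindep hid]
  have hG : Real.Gamma (2 + 1) = 2 := by
    rw [show ((2:ℝ) + 1) = ((2:ℕ) + 1 : ℝ) by norm_num, Real.Gamma_nat_eq_factorial]
    norm_num
  rw [hG]
  have htr : ‖A.trace‖ ^ 2 = (∑ i, hA.eigenvalues i) ^ 2 := by
    rw [herm_trace_eq hA, Complex.norm_real, Real.norm_eq_abs, sq_abs]
  rw [htr, herm_sumsq hA]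
  set E := ((∫ ω, ξ ω ^ 2 ∂P) - (∫ ω, ξ ω ∂P) ^ 2) * ∑ i, hA.eigenvalues i ^ 2
    + (∫ ω, ξ ω ∂P) ^ 2 * (∑ i, hA.eigenvalues i) ^ 2 with hE
  have hE0 : 0 ≤ E / 2 := by
    rw [hE, ← integral_sq_sum P ξ hmeas hmom X hXm hindep hid]
    have : 0 ≤ ∫ ω, (∑ i, X i ω * hA.eigenvalues i) ^ 2 ∂P :=
      integral_nonneg fun ω => sq_nonneg _
    linarith
  rw [← Real.rpow_mul hE0]
  norm_num

/-- If `E[ξ²] < ∞`, then for every `n ≥ 1` and every `Z ∈ M_n(ℂ)`: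
`⦀Z⦀_{X,2}² = (1/2) σ² ‖Z‖_F² + (1/2) μ² |tr Z|²`. -/
theorem matNormXd_two_formula
    {Ω : Type} [MeasurableSpace Ω] (P : Measure Ω) [IsProbabilityMeasure P]
    (ξ : Ω → ℝ) (hmeas : Measurable ξ)
    (hmom : Integrable (fun ω => ξ ω ^ 2) P)
    (μ σ : ℝ) (hμ : μ = ∫ ω, ξ ω ∂P)
    (hσ : σ = Real.sqrt (∫ ω, (ξ ω - μ) ^ 2 ∂P)) :
    ∀ n : ℕ, 1 ≤ n → ∀ X : Fin n → Ω → ℝ,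
      (∀ i, Measurable (X i)) →
      iIndepFun X P →
      (∀ i, IdentDistrib (X i) ξ P P) →
      ∀ Z : Matrix (Fin n) (Fin n) ℂ,
        matNormXd P X 2 Z ^ 2 =
          (1 / 2) * σ ^ 2 * frobNorm Z ^ 2 + (1 / 2) * μ ^ 2 * ‖Z.trace‖ ^ 2 := by
  intro n hn X hXm hindep hid Z
  -- basic integrability of ξ
  have hξ2 : MemLp ξ 2 P := (memLp_two_iff_integrable_sq hmeas.aestronglyMeasurable).2 hmom
  have hξi : Integrable ξ P := (hξ2.mono_exponent one_le_two).integrable le_rfl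
  -- variance identity
  have hσ2 : σ ^ 2 = (∫ ω, ξ ω ^ 2 ∂P) - (∫ ω, ξ ω ∂P) ^ 2 := by
    rw [hσ, Real.sq_sqrt (integral_nonneg fun ω => sq_nonneg _)]
    have hfun : (fun ω => (ξ ω - μ) ^ 2) = fun ω => (ξ ω ^ 2 - (2 * μ) * ξ ω) + μ ^ 2 := by
      funext ω; ring
    have hint1 : Integrable (fun ω => ξ ω ^ 2 - 2 * μ * ξ ω) P := by
      exact hmom.sub (hξi.const_mul (2*μ))
    have hint2 : Integrable (fun ω => 2 * μ * ξ ω) P := by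
      exact hξi.const_mul (2*μ)
    rw [hfun, integral_add hint1 (integrable_const _),
      integral_sub hmom hint2, integral_const_mul, integral_const]
    simp only [measure_univ, ENNReal.toReal_one, smul_eq_mul, one_mul, probReal_univ, mul_one]
    rw [← hμ]
    ring
  have hσ0 : 0 ≤ σ ^ 2 := sq_nonneg σ
  -- notation
  set c : ℂ := Z.trace with hc
  set N : ℝ := ∑ i, ∑ j, ‖Z i j‖ ^ 2 with hN
  set s : ℂ := ∑ i, ∑ j, Z i j * Z j i with hs
  set K : ℝ := σ ^ 2 * N + μ ^ 2 * ‖c‖ ^ 2 with hK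
  set W : ℂ := (σ ^ 2 : ℝ) * s + (μ ^ 2 : ℝ) * c ^ 2 with hW
  have hN0 : 0 ≤ N := Finset.sum_nonneg fun i _ => Finset.sum_nonneg fun j _ => sq_nonneg _
  have hK0 : 0 ≤ K := by positivity
  -- the matrices A t are Hermitian
  have hAt : ∀ t : ℝ, (Complex.exp (↑t * Complex.I) • Z +
      Complex.exp (-(↑t * Complex.I)) • Zᴴ).IsHermitian := by
    intro t
    have h1 : (starRingEnd ℂ) (Complex.exp (↑t * Complex.I)) = Complex.exp (-(↑t * Complex.I)) := by
      rw [← Complex.exp_conj]; congr 1; simp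
    have h2 : (starRingEnd ℂ) (Complex.exp (-(↑t * Complex.I))) = Complex.exp (↑t * Complex.I) := by
      rw [← Complex.exp_conj]; congr 1; simp
    show _ = _
    rw [conjTranspose_add, conjTranspose_smul, conjTranspose_smul, conjTranspose_conjTranspose]
    rw [show (star (Complex.exp (↑t * Complex.I))) = Complex.exp (-(↑t * Complex.I)) from h1,
      show (star (Complex.exp (-(↑t * Complex.I)))) = Complex.exp (↑t * Complex.I) from h2]
    rw [add_comm]
  -- pointwise formula in t
  have hpt : ∀ t : ℝ,
      hermNormXd P X 2 (Complex.exp (↑t * Complex.I) • Z +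
        Complex.exp (-(↑t * Complex.I)) • Zᴴ) ^ (2:ℝ)
      = K + (W.re * Real.cos (2*t) - W.im * Real.sin (2*t)) := by
    intro t
    set u : ℂ := Complex.exp (↑t * Complex.I) with hu
    set v : ℂ := Complex.exp (-(↑t * Complex.I)) with hv
    have huv : u * v = 1 := by
      rw [hu, hv, ← Complex.exp_add, add_neg_cancel, Complex.exp_zero]
    have hcu : (starRingEnd ℂ) u = v := by
      rw [hu, hv, ← Complex.exp_conj]; congr 1; simp
    have hcv : (starRingEnd ℂ) v = u := by
      rw [hu, hv, ← Complex.exp_conj]; congr 1; simp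
    have key : ∀ a b : ℂ, ‖u * a + v * (starRingEnd ℂ) b‖ ^ 2
        = ‖a‖ ^ 2 + ‖b‖ ^ 2 + 2 * (u * u * (a * b)).re := by
      intro a b
      have habs : ∀ z : ℂ, ‖z‖ ^ 2 = (z * (starRingEnd ℂ) z).re := fun z => by
        rw [Complex.mul_conj]; simp [Complex.sq_norm]
      rw [habs, habs, habs]
      have hc1 : (starRingEnd ℂ) (u * a + v * (starRingEnd ℂ) b)
          = v * (starRingEnd ℂ) a + u * b := by
        simp only [map_add, _root_.map_mul, hcu, hcv, Complex.conj_conj]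
      rw [hc1]
      have hc2 : (u * a + v * (starRingEnd ℂ) b) * (v * (starRingEnd ℂ) a + u * b)
          = a * (starRingEnd ℂ) a + b * (starRingEnd ℂ) b
            + (u * u * (a * b) + v * v * ((starRingEnd ℂ) a * (starRingEnd ℂ) b)) := by
        linear_combination (a * (starRingEnd ℂ) a + b * (starRingEnd ℂ) b) * huv
      rw [hc2]
      have hc3 : v * v * ((starRingEnd ℂ) a * (starRingEnd ℂ) b)
          = (starRingEnd ℂ) (u * u * (a * b)) := by
        simp only [_root_.map_mul, hcu] <;> ring
      rw [hc3]
      simp only [Complex.add_re, Complex.conj_re]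
      ring
    -- entries
    have hentry : ∀ i j, (u • Z + v • Zᴴ) i j = u * Z i j + v * (starRingEnd ℂ) (Z j i) := by
      intro i j
      simp [Matrix.add_apply, Matrix.smul_apply, Matrix.conjTranspose_apply, smul_eq_mul]
    have hsum : ∑ i, ∑ j, ‖(u • Z + v • Zᴴ) i j‖ ^ 2
        = 2 * N + 2 * (u * u * s).re := by
      have : ∀ i j, ‖(u • Z + v • Zᴴ) i j‖ ^ 2
          = ‖Z i j‖ ^ 2 + ‖Z j i‖ ^ 2 + 2 * (u * u * (Z i j * Z j i)).re := by
        intro i j; rw [hentry i j, key]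
      simp only [this, Finset.sum_add_distrib]
      have e2 : ∑ i : Fin n, ∑ j : Fin n, ‖Z j i‖ ^ 2 = N := by
        rw [hN]; exact Finset.sum_comm
      have e2' : ∑ i : Fin n, ∑ j : Fin n, ‖Z i j‖ ^ 2 = N := hN.symm
      have e3 : ∑ i : Fin n, ∑ j : Fin n, 2 * (u * u * (Z i j * Z j i)).re
          = 2 * (u * u * s).re := by
        rw [hs]
        simp only [Finset.mul_sum, Complex.re_sum]
      rw [e2, e2', e3]; ring
    have htrace : (u • Z + v • Zᴴ).trace = u * c + v * (starRingEnd ℂ) c := by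
      rw [Matrix.trace_add, Matrix.trace_smul, Matrix.trace_smul, Matrix.trace_conjTranspose]
      simp only [smul_eq_mul, hc]
      rfl
    have htr2 : ‖(u • Z + v • Zᴴ).trace‖ ^ 2
        = 2 * ‖c‖ ^ 2 + 2 * (u * u * (c * c)).re := by
      rw [htrace, key c c]; ring
    rw [hermNormXd_two_sq P ξ hmeas hmom X hXm hindep hid (hAt t)]
    have hμ2 : (∫ ω, ξ ω ∂P) ^ 2 = μ ^ 2 := by rw [← hμ]
    have hσ2' : (∫ ω, ξ ω ^ 2 ∂P) - (∫ ω, ξ ω ∂P) ^ 2 = σ ^ 2 := hσ2.symm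
    rw [hsum, htr2, hσ2', hμ2]
    have hu2 : u * u = Complex.exp (↑(2*t) * Complex.I) := by
      rw [hu, ← Complex.exp_add]; push_cast; ring_nf
    have hre : (u * u * W).re = W.re * Real.cos (2*t) - W.im * Real.sin (2*t) := by
      rw [hu2, Complex.exp_mul_I]
      simp only [Complex.add_re, Complex.add_im, Complex.mul_re, Complex.mul_im,
        Complex.cos_ofReal_re, Complex.sin_ofReal_re, Complex.cos_ofReal_im,
        Complex.sin_ofReal_im, Complex.I_re, Complex.I_im]
      ring
    have hWre : (u * u * W).re = σ ^ 2 * (u * u * s).re + μ ^ 2 * (u * u * (c * c)).re := by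
      have h : u * u * W = ((σ ^ 2 : ℝ) : ℂ) * (u * u * s) + ((μ ^ 2 : ℝ) : ℂ) * (u * u * (c * c)) := by
        rw [hW]; ring
      rw [h]
      simp only [Complex.add_re, Complex.mul_re, Complex.ofReal_re, Complex.ofReal_im]
      ring
    rw [← hre, hWre, hK]
    ring
  -- the trig integrals
  have hcos : (∫ t in (0:ℝ)..(2*Real.pi), Real.cos (2*t)) = 0 := by
    rw [intervalIntegral.integral_comp_mul_left (fun x => Real.cos x) two_ne_zero]
    rw [mul_zero, integral_cos]
    have h4 : Real.sin (2*(2*Real.pi)) = 0 := by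
      rw [show (2:ℝ)*(2*Real.pi) = ((4:ℕ):ℝ)*Real.pi by push_cast; ring]
      exact Real.sin_nat_mul_pi 4
    rw [h4, Real.sin_zero]
    simp
  have hsin : (∫ t in (0:ℝ)..(2*Real.pi), Real.sin (2*t)) = 0 := by
    rw [intervalIntegral.integral_comp_mul_left (fun x => Real.sin x) two_ne_zero]
    rw [mul_zero, integral_sin]
    have h4 : Real.cos (2*(2*Real.pi)) = 1 := by
      rw [show (2:ℝ)*(2*Real.pi) = ((2:ℕ):ℝ)*(2*Real.pi) by norm_num]
      exact Real.cos_nat_mul_two_pi 2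
    rw [h4, Real.cos_zero]
    simp
  have hii1 : IntervalIntegrable (fun t => W.re * Real.cos (2*t)) volume 0 (2*Real.pi) := by
    apply Continuous.intervalIntegrable
    exact continuous_const.mul (Real.continuous_cos.comp (continuous_const.mul continuous_id))
  have hii2 : IntervalIntegrable (fun t => W.im * Real.sin (2*t)) volume 0 (2*Real.pi) := by
    apply Continuous.intervalIntegrable
    exact continuous_const.mul (Real.continuous_sin.comp (continuous_const.mul continuous_id))
  have hint : (∫ t in (0:ℝ)..(2*Real.pi),
      (K + (W.re * Real.cos (2*t) - W.im * Real.sin (2*t)))) = 2*Real.pi*K := by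
    rw [intervalIntegral.integral_add (intervalIntegrable_const) (hii1.sub hii2),
      intervalIntegral.integral_sub hii1 hii2,
      intervalIntegral.integral_const_mul, intervalIntegral.integral_const_mul,
      hcos, hsin, intervalIntegral.integral_const]
    simp
  -- assemble
  rw [matNormXd]
  rw [intervalIntegral.integral_congr (fun t _ => hpt t)]
  rw [hint]
  have hG2 : Real.Gamma ((2:ℝ)/2 + 1) = 1 := by
    norm_num [Real.Gamma_two]
  have hG3 : Real.Gamma ((2:ℝ) + 1) = 2 := by
    rw [show ((2:ℝ) + 1) = ((2:ℕ) + 1 : ℝ) by norm_num, Real.Gamma_nat_eq_factorial]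
    norm_num
  rw [hG2, hG3]
  have hπ : (0:ℝ) < Real.pi := Real.pi_pos
  have hval : (1:ℝ) ^ 2 / (2 * Real.pi * 2) * (2 * Real.pi * K) = K / 2 := by
    field_simp
  rw [hval]
  have hK2 : (0:ℝ) ≤ K / 2 := by linarith
  rw [show ((K/2) ^ (1/(2:ℝ))) ^ (2:ℕ) = ((K/2) ^ (1/(2:ℝ))) ^ ((2:ℕ):ℝ) by
    rw [Real.rpow_natCast]]
  rw [← Real.rpow_mul hK2]
  norm_num
  rw [hK, frobNorm, Real.sq_sqrt hN0, hc]
  ring
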